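/- The signal of the dephasing qubit model is invariant under rotation about the z-axis: if R_θ is the 3×3 rotation matrix about the z-axis by angle θ, and A(h, v) denotes the dephasing Bloch matrix with Hamiltonian vector h = (h_x,h_y,h_z) and dephasing vector v = (α,β,γ), then R_θ A(h,v) R_θᵀ = A(R_θ h, R_θ v). Consequently, for initial state r(0) = (0,0,1)ᵀ (fixed by R_θ), the z-component of the trajectory, e₃ᵀ exp(tA(h,v)) r(0), is unchanged when (h,v) is replaced by (R_θ h, R_θ v). -/

import Mathlib

open Matrix

def blochAv (h v : Fin 3 → ℝ) : Matrix (Fin 3) (Fin 3) ℝ :=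
  !![-(v 1 ^ 2 + v 2 ^ 2), -h 2 + v 0 * v 1, h 1 + v 0 * v 2;
     h 2 + v 0 * v 1, -(v 0 ^ 2 + v 2 ^ 2), -h 0 + v 1 * v 2;
     -h 1 + v 0 * v 2, h 0 + v 1 * v 2, -(v 0 ^ 2 + v 1 ^ 2)]

noncomputable def rotZ (θ : ℝ) : Matrix (Fin 3) (Fin 3) ℝ :=
  !![Real.cos θ, -Real.sin θ, 0;
     Real.sin θ, Real.cos θ, 0;
     0, 0, 1]


lemma rotZ_transpose (θ : ℝ) :
    (rotZ θ)ᵀ = !![Real.cos θ, Real.sin θ, 0;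
                   -Real.sin θ, Real.cos θ, 0;
                   0, 0, 1] := by
  ext i j
  rw [Matrix.transpose_apply]
  fin_cases i <;> fin_cases j <;> simp [rotZ]

lemma rotZ_mul_transpose (θ : ℝ) : rotZ θ * (rotZ θ)ᵀ = 1 := by
  rw [rotZ_transpose]
  ext i j
  fin_cases i <;> fin_cases j <;>
    simp [rotZ, Matrix.mul_apply, Fin.sum_univ_three, Matrix.one_apply] <;>
    nlinarith [Real.sin_sq_add_cos_sq θ]

lemma transpose_mul_rotZ (θ : ℝ) : (rotZ θ)ᵀ * rotZ θ = 1 := by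
  rw [rotZ_transpose]
  ext i j
  fin_cases i <;> fin_cases j <;>
    simp [rotZ, Matrix.mul_apply, Fin.sum_univ_three, Matrix.one_apply] <;>
    nlinarith [Real.sin_sq_add_cos_sq θ]

lemma conj_eq (h v : Fin 3 → ℝ) (θ : ℝ) :
    rotZ θ * blochAv h v * (rotZ θ)ᵀ
        = blochAv ((rotZ θ).mulVec h) ((rotZ θ).mulVec v) := by
  have hs := Real.sin_sq_add_cos_sq θ
  rw [rotZ_transpose]
  ext i j
  fin_cases i <;> fin_cases j <;>
    simp [rotZ, blochAv, Matrix.mul_apply, Matrix.mulVec,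
      dotProduct, Fin.sum_univ_three] <;>
    first
      | nlinarith [hs]
      | linear_combination (-(h 2)) * hs
      | linear_combination (h 2) * hs

theorem blochA_rotZ_invariance (h v : Fin 3 → ℝ) (θ : ℝ) :
    rotZ θ * blochAv h v * (rotZ θ)ᵀ
        = blochAv ((rotZ θ).mulVec h) ((rotZ θ).mulVec v)
    ∧ ∀ t : ℝ,
        (NormedSpace.exp (t • blochAv h v)).mulVec ![0, 0, 1] 2
          = (NormedSpace.exp
              (t • blochAv ((rotZ θ).mulVec h) ((rotZ θ).mulVec v))).mulVec ![0, 0, 1] 2 := by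
  refine ⟨conj_eq h v θ, fun t => ?_⟩
  set R : Matrix (Fin 3) (Fin 3) ℝ := rotZ θ with hR
  let u : (Matrix (Fin 3) (Fin 3) ℝ)ˣ :=
    ⟨R, Rᵀ, rotZ_mul_transpose θ, transpose_mul_rotZ θ⟩
  have key : t • blochAv ((rotZ θ).mulVec h) ((rotZ θ).mulVec v)
      = R * (t • blochAv h v) * Rᵀ := by
    rw [← conj_eq h v θ]
    simp [hR, Matrix.mul_smul, Matrix.smul_mul]
  rw [key]
  have hexp : NormedSpace.exp (R * (t • blochAv h v) * Rᵀ)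
      = R * NormedSpace.exp (t • blochAv h v) * Rᵀ := by
    have := Matrix.exp_units_conj u (t • blochAv h v)
    simpa [u] using this
  rw [hexp]
  set M := NormedSpace.exp (t • blochAv h v) with hM
  have h1 : Rᵀ.mulVec ![0, 0, 1] = ![0, 0, 1] := by
    rw [hR, rotZ_transpose]
    funext i
    fin_cases i <;>
      simp [Matrix.mulVec, dotProduct, Fin.sum_univ_three]
  rw [Matrix.mul_assoc, ← Matrix.mulVec_mulVec, ← Matrix.mulVec_mulVec, h1]
  simp [hR, rotZ, Matrix.mulVec, dotProduct, Fin.sum_univ_three]
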